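/- The map x ↦ (x(t₁), …, x(t_{m−1})) is a bijection from the set of continuous solutions of the loaded Volterra integral equation onto the solution set {c ∈ ℝ^{m−1} : A(λ) c = d(λ)} of the associated linear algebraic system. -/

import Mathlib

open MeasureTheory Matrix intervalIntegral Set

noncomputable def iterK (K2 : ℝ → ℝ → ℝ) : ℕ → ℝ → ℝ → ℝ
  | 0 => K2
  | n+1 => fun t s => ∫ z in s..t, K2 t z * iterK K2 n z s

lemma iterK_cont {K2 : ℝ → ℝ → ℝ} (hK2 : Continuous fun q : ℝ × ℝ => K2 q.1 q.2) :
    ∀ n, Continuous fun q : ℝ × ℝ => iterK K2 n q.1 q.2 := by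
  intro n
  induction n with
  | zero => exact hK2
  | succ n ih =>
    have hF : Continuous fun q : (ℝ × ℝ) × ℝ => K2 q.1.1 q.2 * iterK K2 n q.2 q.1.2 := by
      have h1 : Continuous fun q : (ℝ × ℝ) × ℝ => K2 q.1.1 q.2 :=
        hK2.comp ((continuous_fst.comp continuous_fst).prodMk continuous_snd)
      have h2 : Continuous fun q : (ℝ × ℝ) × ℝ => iterK K2 n q.2 q.1.2 :=
        ih.comp (continuous_snd.prodMk (continuous_snd.comp continuous_fst))
      exact h1.mul h2
    have key : ∀ q : ℝ × ℝ, iterK K2 (n+1) q.1 q.2 =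
        (∫ z in (0:ℝ)..q.1, K2 q.1 z * iterK K2 n z q.2)
          - ∫ z in (0:ℝ)..q.2, K2 q.1 z * iterK K2 n z q.2 := by
      intro q
      have hint : ∀ u v : ℝ, IntervalIntegrable
          (fun z => K2 q.1 z * iterK K2 n z q.2) volume u v := by
        intro u v
        apply Continuous.intervalIntegrable
        exact hF.comp (by fun_prop : Continuous fun z : ℝ => ((q.1, q.2), z))
      have := integral_add_adjacent_intervals (hint 0 q.2) (hint q.2 q.1)
      show (∫ z in q.2..q.1, K2 q.1 z * iterK K2 n z q.2) = _
      linarith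
    have c1 : Continuous fun q : ℝ × ℝ =>
        ∫ z in (0:ℝ)..q.1, K2 q.1 z * iterK K2 n z q.2 :=
      intervalIntegral.continuous_parametric_intervalIntegral_of_continuous
        (f := fun (q : ℝ × ℝ) z => K2 q.1 z * iterK K2 n z q.2) hF continuous_fst
    have c2 : Continuous fun q : ℝ × ℝ =>
        ∫ z in (0:ℝ)..q.2, K2 q.1 z * iterK K2 n z q.2 :=
      intervalIntegral.continuous_parametric_intervalIntegral_of_continuous
        (f := fun (q : ℝ × ℝ) z => K2 q.1 z * iterK K2 n z q.2) hF continuous_snd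
    have : (fun q : ℝ × ℝ => iterK K2 (n+1) q.1 q.2) = fun q =>
        (∫ z in (0:ℝ)..q.1, K2 q.1 z * iterK K2 n z q.2)
          - ∫ z in (0:ℝ)..q.2, K2 q.1 z * iterK K2 n z q.2 := funext key
    rw [this]
    exact c1.sub c2

lemma iterK_bound {K2 : ℝ → ℝ → ℝ} (hK2 : Continuous fun q : ℝ × ℝ => K2 q.1 q.2)
    {t₀ T B : ℝ} (hB0 : 0 ≤ B)
    (hB : ∀ t s, t₀ ≤ s → s ≤ t → t ≤ T → |K2 t s| ≤ B) :
    ∀ n t s, t₀ ≤ s → s ≤ t → t ≤ T →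
      |iterK K2 n t s| ≤ B ^ (n+1) * (t - s) ^ n / n.factorial := by
  intro n
  induction n with
  | zero => intro t s h1 h2 h3; simpa [iterK] using hB t s h1 h2 h3
  | succ n ih =>
    intro t s h1 h2 h3
    have hcont : Continuous fun z => K2 t z * iterK K2 n z s := by
      have := (iterK_cont hK2 n)
      exact (hK2.comp ((continuous_const (y := t)).prodMk continuous_id)).mul
        (this.comp (continuous_id.prodMk (continuous_const (y := s))))
    have habs : |iterK K2 (n+1) t s| ≤ ∫ z in s..t, |K2 t z * iterK K2 n z s| :=
      intervalIntegral.abs_integral_le_integral_abs h2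
    have hmono : (∫ z in s..t, |K2 t z * iterK K2 n z s|) ≤
        ∫ z in s..t, B * (B ^ (n+1) * (z - s) ^ n / n.factorial) := by
      apply intervalIntegral.integral_mono_on h2
      · exact hcont.abs.intervalIntegrable _ _
      · apply Continuous.intervalIntegrable; fun_prop
      · intro z hz
        rw [abs_mul]
        have h1' : |K2 t z| ≤ B := hB t z (h1.trans hz.1) hz.2 h3
        have h2' : |iterK K2 n z s| ≤ B ^ (n+1) * (z - s) ^ n / n.factorial :=
          ih z s h1 hz.1 (hz.2.trans h3)
        exact mul_le_mul h1' h2' (abs_nonneg _) hB0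
    have hcomp : (∫ z in s..t, B * (B ^ (n+1) * (z - s) ^ n / n.factorial)) =
        B ^ (n+2) * (t - s) ^ (n+1) / (n+1).factorial := by
      have e1 : (∫ z in s..t, B * (B ^ (n+1) * (z - s) ^ n / n.factorial)) =
          (B * (B ^ (n+1) / n.factorial)) * ∫ z in s..t, (z - s) ^ n := by
        rw [← intervalIntegral.integral_const_mul]
        congr 1; ext z; ring
      have e2 : (∫ z in s..t, (z - s) ^ n) = (t - s) ^ (n+1) / (n+1) := by
        have := intervalIntegral.integral_comp_sub_right (fun x => x ^ n) s (a := s) (b := t)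
        rw [this]; simp [integral_pow]
      rw [e1, e2, Nat.factorial_succ]
      have hfac : (0:ℝ) < n.factorial := by positivity
      push_cast
      field_simp
      ring
    calc |iterK K2 (n+1) t s| ≤ _ := habs
      _ ≤ _ := hmono
      _ = _ := hcomp

lemma fubini_triangle {t₀ t : ℝ} (h : t₀ ≤ t) (φ : ℝ → ℝ → ℝ)
    (hφ : Continuous fun q : ℝ × ℝ => φ q.1 q.2) :
    (∫ s in t₀..t, ∫ z in t₀..s, φ s z) = ∫ z in t₀..t, ∫ s in z..t, φ s z := by
  haveI : IsFiniteMeasure (volume.restrict (Ioc t₀ t)) := by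
    constructor
    rw [Measure.restrict_apply_univ, Real.volume_Ioc]
    exact ENNReal.ofReal_lt_top
  have hmeas : MeasurableSet {q : ℝ × ℝ | q.2 ≤ q.1} :=
    (isClosed_le continuous_snd continuous_fst).measurableSet
  set Φ : ℝ → ℝ → ℝ := fun s z =>
    ({q : ℝ × ℝ | q.2 ≤ q.1}).indicator (fun q => φ q.1 q.2) (s, z) with hΦdef
  obtain ⟨C, hC⟩ : ∃ C, ∀ q ∈ Icc t₀ t ×ˢ Icc t₀ t, |φ q.1 q.2| ≤ C := by
    obtain ⟨C, hC⟩ := (isCompact_Icc.prod isCompact_Icc).exists_bound_of_continuousOn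
      hφ.continuousOn
    exact ⟨C, by simpa using hC⟩
  have hΦint : Integrable (fun q : ℝ × ℝ => Φ q.1 q.2)
      ((volume.restrict (Ioc t₀ t)).prod (volume.restrict (Ioc t₀ t))) := by
    refine ⟨(hφ.aestronglyMeasurable.indicator hmeas), ?_⟩
    apply HasFiniteIntegral.mono' (g := fun _ => C)
      (integrable_const C).hasFiniteIntegral
    rw [Measure.prod_restrict]
    refine (ae_restrict_iff' (measurableSet_Ioc.prod measurableSet_Ioc)).2
      (Filter.Eventually.of_forall ?_)
    intro q hq
    calc ‖Φ q.1 q.2‖ ≤ ‖φ q.1 q.2‖ := norm_indicator_le_norm_self _ _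
      _ ≤ C := by
          rw [Real.norm_eq_abs]
          exact hC q ⟨Ioc_subset_Icc_self hq.1, Ioc_subset_Icc_self hq.2⟩
  have lhs_eq : (∫ s in t₀..t, ∫ z in t₀..s, φ s z)
      = ∫ s in Ioc t₀ t, ∫ z in Ioc t₀ t, Φ s z := by
    rw [intervalIntegral.integral_of_le h]
    apply setIntegral_congr_fun measurableSet_Ioc
    intro s hs
    dsimp only
    have h1 : (fun z => Φ s z) = (Iic s).indicator (fun z => φ s z) := by
      funext z
      simp [hΦdef, Set.indicator_apply]
    rw [h1, setIntegral_indicator measurableSet_Iic, Set.Ioc_inter_Iic,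
      min_eq_right hs.2, intervalIntegral.integral_of_le hs.1.le]
  have rhs_eq : (∫ z in t₀..t, ∫ s in z..t, φ s z)
      = ∫ z in Ioc t₀ t, ∫ s in Ioc t₀ t, Φ s z := by
    rw [intervalIntegral.integral_of_le h]
    apply setIntegral_congr_fun measurableSet_Ioc
    intro z hz
    dsimp only
    have h1 : (fun s => Φ s z) = (Ici z).indicator (fun s => φ s z) := by
      funext s
      simp [hΦdef, Set.indicator_apply]
    have h2 : Ioc t₀ t ∩ Ici z = Icc z t := by
      ext s
      simp only [Set.mem_inter_iff, Set.mem_Ioc, Set.mem_Ici, Set.mem_Icc]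
      constructor
      · rintro ⟨⟨_, hst⟩, hzs⟩; exact ⟨hzs, hst⟩
      · rintro ⟨hzs, hst⟩; exact ⟨⟨lt_of_lt_of_le hz.1 hzs, hst⟩, hzs⟩
    rw [h1, setIntegral_indicator measurableSet_Ici, h2,
      integral_Icc_eq_integral_Ioc, intervalIntegral.integral_of_le hz.2]
  rw [lhs_eq, rhs_eq, MeasureTheory.integral_integral_swap hΦint]

lemma volterra_unique {t₀ T lam : ℝ} (ht : t₀ ≤ T) {K2 : ℝ → ℝ → ℝ}
    (hK2 : Continuous fun q : ℝ × ℝ => K2 q.1 q.2) {w : ℝ → ℝ} (hw : Continuous w)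
    (hsol : ∀ t ∈ Set.Icc t₀ T, w t = lam * ∫ s in t₀..t, K2 t s * w s) :
    ∀ t ∈ Set.Icc t₀ T, w t = 0 := by
  obtain ⟨B, hB0, hB⟩ : ∃ B, 0 ≤ B ∧ ∀ q ∈ Icc t₀ T ×ˢ Icc t₀ T, |K2 q.1 q.2| ≤ B := by
    obtain ⟨C, hC⟩ := (isCompact_Icc.prod isCompact_Icc).exists_bound_of_continuousOn
      hK2.continuousOn
    refine ⟨max C 0, le_max_right _ _, fun q hq => ?_⟩
    exact le_trans (by simpa using hC q hq) (le_max_left _ _)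
  obtain ⟨M, hM0, hM⟩ : ∃ M, 0 ≤ M ∧ ∀ u ∈ Icc t₀ T, |w u| ≤ M := by
    obtain ⟨C, hC⟩ := isCompact_Icc.exists_bound_of_continuousOn hw.continuousOn
    refine ⟨max C 0, le_max_right _ _, fun u hu => ?_⟩
    exact le_trans (by simpa using hC u hu) (le_max_left _ _)
  have key : ∀ n, ∀ t ∈ Icc t₀ T,
      |w t| ≤ M * ((|lam| * B) ^ n * (t - t₀) ^ n / n.factorial) := by
    intro n
    induction n with
    | zero => intro t htm; simpa using hM t htm
    | succ n ih =>
      intro t htm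
      rw [hsol t htm, abs_mul]
      have h2 : t₀ ≤ t := htm.1
      have habs : |∫ s in t₀..t, K2 t s * w s| ≤ ∫ s in t₀..t, |K2 t s * w s| :=
        intervalIntegral.abs_integral_le_integral_abs h2
      have hcont : Continuous fun s => K2 t s * w s :=
        (hK2.comp ((continuous_const (y := t)).prodMk continuous_id)).mul hw
      have hmono : (∫ s in t₀..t, |K2 t s * w s|) ≤
          ∫ s in t₀..t, B * (M * ((|lam| * B) ^ n * (s - t₀) ^ n / n.factorial)) := by
        apply intervalIntegral.integral_mono_on h2
        · exact hcont.abs.intervalIntegrable _ _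
        · apply Continuous.intervalIntegrable; fun_prop
        · intro s hs
          have hsm : s ∈ Icc t₀ T := ⟨hs.1, hs.2.trans htm.2⟩
          rw [abs_mul]
          refine mul_le_mul (hB (t, s) ⟨htm, hsm⟩) (ih s hsm) (abs_nonneg _) hB0
      have hcomp : (∫ s in t₀..t, B * (M * ((|lam| * B) ^ n * (s - t₀) ^ n / n.factorial)))
          = B * M * (|lam| * B) ^ n / n.factorial * ((t - t₀) ^ (n+1) / (n+1)) := by
        have e1 : (∫ s in t₀..t, B * (M * ((|lam| * B) ^ n * (s - t₀) ^ n / n.factorial)))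
            = (B * M * (|lam| * B) ^ n / n.factorial) * ∫ s in t₀..t, (s - t₀) ^ n := by
          rw [← intervalIntegral.integral_const_mul]
          congr 1; ext s; ring
        have e2 : (∫ s in t₀..t, (s - t₀) ^ n) = (t - t₀) ^ (n+1) / (n+1) := by
          have := intervalIntegral.integral_comp_sub_right (fun x => x ^ n) t₀ (a := t₀) (b := t)
          rw [this]; simp [integral_pow]
        rw [e1, e2]
      calc |lam| * |∫ s in t₀..t, K2 t s * w s|
          ≤ |lam| * (B * M * (|lam| * B) ^ n / n.factorial * ((t - t₀) ^ (n+1) / (n+1))) := by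
            apply mul_le_mul_of_nonneg_left _ (abs_nonneg lam)
            rw [← hcomp]; exact habs.trans hmono
        _ = M * ((|lam| * B) ^ (n+1) * (t - t₀) ^ (n+1) / (n+1).factorial) := by
            rw [Nat.factorial_succ]
            have hfac : (0:ℝ) < n.factorial := by positivity
            push_cast
            field_simp
            ring
  intro t htm
  have hlim : Filter.Tendsto
      (fun n : ℕ => M * ((|lam| * B * (T - t₀)) ^ n / n.factorial)) Filter.atTop (nhds 0) := by
    have := FloorSemiring.tendsto_pow_div_factorial_atTop (K := ℝ) (|lam| * B * (T - t₀))
    simpa using this.const_mul M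
  have hle : ∀ n : ℕ, |w t| ≤ M * ((|lam| * B * (T - t₀)) ^ n / n.factorial) := by
    intro n
    refine (key n t htm).trans ?_
    have h1 : (|lam| * B) ^ n * (t - t₀) ^ n ≤ (|lam| * B * (T - t₀)) ^ n := by
      rw [mul_pow ( |lam| * B) (T - t₀) n]
      have h1 := pow_le_pow_left₀ (by linarith [htm.1] : (0:ℝ) ≤ t - t₀)
        (by linarith [htm.2] : t - t₀ ≤ T - t₀) n
      exact mul_le_mul_of_nonneg_left h1 (by positivity)
    have hfac : (0:ℝ) < n.factorial := by positivity
    apply mul_le_mul_of_nonneg_left _ hM0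
    gcongr
  have h0 : |w t| ≤ 0 := le_of_tendsto_of_tendsto' tendsto_const_nhds hlim hle
  exact abs_nonpos_iff.mp h0

section Resolvent

variable {K2 : ℝ → ℝ → ℝ} {t₀ T B lam : ℝ}


lemma pow_div_fact_mono {B x y : ℝ} (hB0 : 0 ≤ B) (h0 : 0 ≤ x) (hxy : x ≤ y) (n : ℕ) :
    B ^ (n+1) * x ^ n / n.factorial ≤ B ^ (n+1) * y ^ n / n.factorial := by
  have hp : x ^ n ≤ y ^ n := pow_le_pow_left₀ h0 hxy n
  have hBp : (0:ℝ) ≤ B ^ (n+1) := pow_nonneg hB0 _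
  have hfac : (0:ℝ) < (n.factorial : ℝ) := by positivity
  rw [div_le_div_iff₀ hfac hfac]
  exact mul_le_mul_of_nonneg_right (mul_le_mul_of_nonneg_left hp hBp) hfac.le

lemma summable_aux (hB0 : 0 ≤ B) (hTt : 0 ≤ T - t₀) :
    Summable (fun n : ℕ => |lam| ^ (n+1) * (B ^ (n+1) * (T - t₀) ^ n / n.factorial)) := by
  have h := (Real.summable_pow_div_factorial (|lam| * B * (T - t₀))).mul_left (|lam| * B)
  refine h.congr fun n => ?_
  rw [mul_pow, mul_pow]
  field_simp
  ring

lemma iterK_norm_le (hK2 : Continuous fun q : ℝ × ℝ => K2 q.1 q.2) (hB0 : 0 ≤ B)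
    (hB : ∀ t s, t₀ ≤ s → s ≤ t → t ≤ T → |K2 t s| ≤ B)
    {t s : ℝ} (h1 : t₀ ≤ s) (h2 : s ≤ t) (h3 : t ≤ T) (n : ℕ) :
    ‖lam ^ (n+1) * iterK K2 n t s‖ ≤ |lam| ^ (n+1) * (B ^ (n+1) * (T - t₀) ^ n / n.factorial) := by
  rw [Real.norm_eq_abs, abs_mul, abs_pow]
  apply mul_le_mul_of_nonneg_left _ (by positivity)
  refine (iterK_bound hK2 hB0 hB n t s h1 h2 h3).trans ?_
  exact pow_div_fact_mono hB0 (by linarith) (by linarith) n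

lemma summable_pt (hK2 : Continuous fun q : ℝ × ℝ => K2 q.1 q.2) (hB0 : 0 ≤ B)
    (hB : ∀ t s, t₀ ≤ s → s ≤ t → t ≤ T → |K2 t s| ≤ B)
    {t s : ℝ} (h1 : t₀ ≤ s) (h2 : s ≤ t) (h3 : t ≤ T) :
    Summable (fun n : ℕ => lam ^ (n+1) * iterK K2 n t s) :=
  Summable.of_norm_bounded (summable_aux (lam := lam) hB0 (by linarith))
    (fun n => iterK_norm_le hK2 hB0 hB h1 h2 h3 n)

lemma resolvent_id (hK2 : Continuous fun q : ℝ × ℝ => K2 q.1 q.2) (hB0 : 0 ≤ B)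
    (hB : ∀ t s, t₀ ≤ s → s ≤ t → t ≤ T → |K2 t s| ≤ B)
    {RE : ℝ × ℝ → ℝ} (hRE : Continuous RE)
    (hREeq : ∀ t s, t₀ ≤ s → s ≤ t → t ≤ T →
      RE (t, s) = ∑' n : ℕ, lam ^ (n+1) * iterK K2 n t s) :
    ∀ t s, t₀ ≤ s → s ≤ t → t ≤ T →
      RE (t, s) = lam * K2 t s + lam * ∫ z in s..t, K2 t z * RE (z, s) := by
  intro t s h1 h2 h3
  -- Step A: the integral equals the series of next iterated kernels
  have stepA : (∫ z in s..t, K2 t z * RE (z, s))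
      = ∑' n : ℕ, lam ^ (n+1) * iterK K2 (n+1) t s := by
    have hcong : (∫ z in s..t, K2 t z * RE (z, s))
        = ∫ z in s..t, ∑' n : ℕ, lam ^ (n+1) * (K2 t z * iterK K2 n z s) := by
      apply intervalIntegral.integral_congr
      intro z hz
      rw [Set.uIcc_of_le h2] at hz
      dsimp only
      rw [hREeq z s h1 hz.1 (hz.2.trans h3), tsum_mul_left.symm]
      exact tsum_congr fun n => by ring
    rw [hcong, intervalIntegral.integral_of_le h2]
    have hswap : (∫ z in Ioc s t, ∑' n : ℕ, lam ^ (n+1) * (K2 t z * iterK K2 n z s))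
        = ∑' n : ℕ, ∫ z in Ioc s t, lam ^ (n+1) * (K2 t z * iterK K2 n z s) := by
      refine (integral_tsum_of_summable_integral_norm ?_ ?_).symm
      · intro n
        apply Continuous.integrableOn_Ioc
        exact continuous_const.mul ((hK2.comp ((continuous_const (y := t)).prodMk
          continuous_id)).mul ((iterK_cont hK2 n).comp
          (continuous_id.prodMk (continuous_const (y := s)))))
      · set v : ℕ → ℝ := fun n =>
          (T - t₀) * (B * (|lam| ^ (n+1) * (B ^ (n+1) * (T - t₀) ^ n / n.factorial))) with hv
        have hvs : Summable v :=
          ((summable_aux (lam := lam) hB0 (by linarith)).mul_left B).mul_left (T - t₀)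
        apply Summable.of_nonneg_of_le (fun n => ?_) (fun n => ?_) hvs
        · exact integral_nonneg fun z => norm_nonneg _
        · have hbd : ∀ z ∈ Ioc s t, ‖lam ^ (n+1) * (K2 t z * iterK K2 n z s)‖
              ≤ B * (|lam| ^ (n+1) * (B ^ (n+1) * (T - t₀) ^ n / n.factorial)) := by
            intro z hz
            rw [Real.norm_eq_abs, abs_mul, abs_mul, abs_pow]
            have e1 : |K2 t z| ≤ B := hB t z (h1.trans hz.1.le) hz.2 h3
            have e2 : |iterK K2 n z s| ≤ B ^ (n+1) * (T - t₀) ^ n / n.factorial := by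
              refine (iterK_bound hK2 hB0 hB n z s h1 hz.1.le (hz.2.trans h3)).trans ?_
              have h4 : z ≤ T := hz.2.trans h3
              exact pow_div_fact_mono hB0 (by linarith [hz.1.le]) (by linarith) n
            calc |lam| ^ (n+1) * (|K2 t z| * |iterK K2 n z s|)
                ≤ |lam| ^ (n+1) * (B * (B ^ (n+1) * (T - t₀) ^ n / n.factorial)) := by
                  apply mul_le_mul_of_nonneg_left _ (by positivity)
                  exact mul_le_mul e1 e2 (abs_nonneg _) hB0
              _ = B * (|lam| ^ (n+1) * (B ^ (n+1) * (T - t₀) ^ n / n.factorial)) := by ring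
          calc (∫ z in Ioc s t, ‖lam ^ (n+1) * (K2 t z * iterK K2 n z s)‖)
              ≤ ∫ _ in Ioc s t, B * (|lam| ^ (n+1) * (B ^ (n+1) * (T - t₀) ^ n / n.factorial)) := by
                apply setIntegral_mono_on
                · apply Continuous.integrableOn_Ioc
                  apply Continuous.norm
                  exact continuous_const.mul ((hK2.comp ((continuous_const (y := t)).prodMk
                    continuous_id)).mul ((iterK_cont hK2 n).comp
                    (continuous_id.prodMk (continuous_const (y := s)))))
                · exact continuous_const.integrableOn_Ioc
                · exact measurableSet_Ioc
                · exact hbd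
            _ = (volume (Ioc s t)).toReal
                  * (B * (|lam| ^ (n+1) * (B ^ (n+1) * (T - t₀) ^ n / n.factorial))) := by
                rw [setIntegral_const, smul_eq_mul]; rfl
            _ ≤ v n := by
                rw [hv]
                apply mul_le_mul_of_nonneg_right _
                  (mul_nonneg hB0 (mul_nonneg (pow_nonneg (abs_nonneg _) _)
                    (div_nonneg (mul_nonneg (pow_nonneg hB0 _)
                      (pow_nonneg (by linarith) _)) (Nat.cast_nonneg _))))
                rw [Real.volume_Ioc, ENNReal.toReal_ofReal_eq_iff.2 (by linarith)]
                linarith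
    rw [hswap]
    refine tsum_congr fun n => ?_
    rw [MeasureTheory.integral_const_mul]
    congr 1
    rw [← intervalIntegral.integral_of_le h2]
    rfl
  -- Step B
  have hsum := summable_pt (lam := lam) hK2 hB0 hB h1 h2 h3
  rw [hREeq t s h1 h2 h3, hsum.tsum_eq_zero_add, stepA]
  have e0 : lam ^ (0+1) * iterK K2 0 t s = lam * K2 t s := by
    simp [iterK]
  rw [e0]
  congr 1
  rw [← tsum_mul_left]
  exact tsum_congr fun n => by ring

lemma resolvent_sol (hK2 : Continuous fun q : ℝ × ℝ => K2 q.1 q.2) (hB0 : 0 ≤ B)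
    (hB : ∀ t s, t₀ ≤ s → s ≤ t → t ≤ T → |K2 t s| ≤ B)
    {RE : ℝ × ℝ → ℝ} (hRE : Continuous RE)
    (hREeq : ∀ t s, t₀ ≤ s → s ≤ t → t ≤ T →
      RE (t, s) = ∑' n : ℕ, lam ^ (n+1) * iterK K2 n t s)
    {g : ℝ → ℝ} (hg : Continuous g) :
    ∀ t ∈ Set.Icc t₀ T,
      g t + (∫ s in t₀..t, RE (t, s) * g s)
        = lam * (∫ s in t₀..t, K2 t s * (g s + ∫ z in t₀..s, RE (s, z) * g z)) + g t := by
  intro t htm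
  obtain ⟨h0, h3⟩ := htm
  have hJcont : Continuous fun s => ∫ z in t₀..s, RE (s, z) * g z := by
    apply intervalIntegral.continuous_parametric_intervalIntegral_of_continuous
      (f := fun s z => RE (s, z) * g z) ?_ continuous_id
    exact (hRE.comp (continuous_fst.prodMk continuous_snd)).mul (hg.comp continuous_snd)
  have hK2t : Continuous fun s => K2 t s :=
    hK2.comp ((continuous_const (y := t)).prodMk continuous_id)
  have split : (∫ s in t₀..t, K2 t s * (g s + ∫ z in t₀..s, RE (s, z) * g z))
      = (∫ s in t₀..t, K2 t s * g s)
        + ∫ s in t₀..t, K2 t s * ∫ z in t₀..s, RE (s, z) * g z := by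
    rw [← intervalIntegral.integral_add (f := fun s => K2 t s * g s)
      (g := fun s => K2 t s * ∫ z in t₀..s, RE (s, z) * g z) ((hK2t.mul hg).intervalIntegrable _ _)
      ((hK2t.mul hJcont).intervalIntegrable _ _)]
    apply intervalIntegral.integral_congr; intro s _; dsimp only; ring
  have step2 : (∫ s in t₀..t, K2 t s * ∫ z in t₀..s, RE (s, z) * g z)
      = ∫ s in t₀..t, ∫ z in t₀..s, K2 t s * (RE (s, z) * g z) := by
    apply intervalIntegral.integral_congr; intro s _; dsimp only
    rw [← intervalIntegral.integral_const_mul]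
  have step3 : (∫ s in t₀..t, ∫ z in t₀..s, K2 t s * (RE (s, z) * g z))
      = ∫ z in t₀..t, ∫ s in z..t, K2 t s * (RE (s, z) * g z) := by
    apply fubini_triangle h0
    exact (hK2.comp ((continuous_const (y := t)).prodMk continuous_fst)).mul
      ((hRE.comp (continuous_fst.prodMk continuous_snd)).mul (hg.comp continuous_snd))
  have step4 : ∀ z, (∫ s in z..t, K2 t s * (RE (s, z) * g z))
      = (∫ s in z..t, K2 t s * RE (s, z)) * g z := by
    intro z
    rw [← intervalIntegral.integral_mul_const]
    apply intervalIntegral.integral_congr; intro s _; dsimp only; ring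
  have step5 : (lam * ∫ z in t₀..t, ∫ s in z..t, K2 t s * (RE (s, z) * g z))
      = ∫ z in t₀..t, (RE (t, z) - lam * K2 t z) * g z := by
    rw [← intervalIntegral.integral_const_mul]
    apply intervalIntegral.integral_congr
    intro z hz
    rw [Set.uIcc_of_le h0] at hz
    dsimp only
    rw [step4 z]
    have hid := resolvent_id hK2 hB0 hB hRE hREeq t z hz.1 hz.2 h3
    have hkey : lam * ∫ s in z..t, K2 t s * RE (s, z) = RE (t, z) - lam * K2 t z := by
      rw [hid]; ring
    calc lam * ((∫ s in z..t, K2 t s * RE (s, z)) * g z)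
        = (lam * ∫ s in z..t, K2 t s * RE (s, z)) * g z := by ring
      _ = (RE (t, z) - lam * K2 t z) * g z := by rw [hkey]
  have step6 : (∫ z in t₀..t, (RE (t, z) - lam * K2 t z) * g z)
      = (∫ z in t₀..t, RE (t, z) * g z) - lam * ∫ z in t₀..t, K2 t z * g z := by
    have c1 : Continuous fun z : ℝ => RE (t, z) * g z :=
      ((hRE.comp ((continuous_const (y := t)).prodMk continuous_id)).mul hg)
    have c2 : Continuous fun z : ℝ => lam * (K2 t z * g z) :=
      continuous_const.mul (hK2t.mul hg)
    rw [← intervalIntegral.integral_const_mul,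
      ← intervalIntegral.integral_sub (c1.intervalIntegrable _ _) (c2.intervalIntegrable _ _)]
    apply intervalIntegral.integral_congr; intro z _; dsimp only; ring
  rw [split, mul_add, step2, step3, step5, step6]
  ring

end Resolvent

open Matrix in
/-- The load map x ↦ (x(t₁),…,x(t_{m-1})) is a bijection from the set of continuous
solutions of the LVIE onto the solution set of the linear system A(λ)c = d(λ). -/
theorem lvie_solutions_biject_with_slae_solutions
    (t₀ T : ℝ) (ht : t₀ < T) (m : ℕ) (hm : 2 ≤ m)
    (p : Fin (m - 1) → ℝ) (hpmono : StrictMono p)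
    (hp : ∀ j, t₀ < p j ∧ p j < T)
    (f : ℝ → ℝ) (hf : ContinuousOn f (Set.Icc t₀ T))
    (a : Fin (m - 1) → ℝ → ℝ) (ha : ∀ j, ContinuousOn (a j) (Set.Icc t₀ T))
    (K : ℝ → ℝ → ℝ)
    (hK : ContinuousOn (fun q : ℝ × ℝ => K q.1 q.2)
      {q : ℝ × ℝ | t₀ ≤ q.2 ∧ q.2 ≤ q.1 ∧ q.1 ≤ T})
    (lam : ℝ)
    (Kn : ℕ → ℝ → ℝ → ℝ)
    (hKn1 : ∀ t s, Kn 1 t s = K t s)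
    (hKnrec : ∀ n, 2 ≤ n → ∀ t s, Kn n t s = ∫ z in s..t, K t z * Kn (n - 1) z s)
    (R : ℝ → ℝ → ℝ → ℝ)
    (hR : ∀ t s lam', R t s lam' = ∑' n : ℕ, lam' ^ (n + 1) * Kn (n + 1) t s)
    (F : ℝ → ℝ → ℝ)
    (hF : ∀ t lam', F t lam' = f t + ∫ s in t₀..t, R t s lam' * f s)
    (b : Fin (m - 1) → ℝ → ℝ → ℝ)
    (hb : ∀ j t lam', b j t lam' = a j t + ∫ s in t₀..t, R t s lam' * a j s)
    (A : Matrix (Fin (m - 1)) (Fin (m - 1)) ℝ)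
    (hA : ∀ i j, A i j = (if i = j then 1 else 0) + b j (p i) lam)
    (d : Fin (m - 1) → ℝ)
    (hd : ∀ i, d i = F (p i) lam) :
    Set.BijOn
      (fun x : C(Set.Icc t₀ T, ℝ) => fun j => Set.IccExtend ht.le x (p j))
      {x : C(Set.Icc t₀ T, ℝ) |
        ∀ t ∈ Set.Icc t₀ T,
          Set.IccExtend ht.le x t + ∑ j, a j t * Set.IccExtend ht.le x (p j) =
            lam * (∫ s in t₀..t, K t s * Set.IccExtend ht.le x s) + f t}
      {c : Fin (m - 1) → ℝ | A *ᵥ c = d} := by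
  classical
  have htle := ht.le
  set Tri : Set (ℝ × ℝ) := {q : ℝ × ℝ | t₀ ≤ q.2 ∧ q.2 ≤ q.1 ∧ q.1 ≤ T} with hTridef
  have hTriClosed : IsClosed Tri := by
    have : Tri = {q : ℝ × ℝ | t₀ ≤ q.2} ∩ ({q : ℝ × ℝ | q.2 ≤ q.1} ∩ {q : ℝ × ℝ | q.1 ≤ T}) := rfl
    rw [this]
    exact (isClosed_le continuous_const continuous_snd).inter
      ((isClosed_le continuous_snd continuous_fst).inter
        (isClosed_le continuous_fst continuous_const))
  -- extend K continuously
  obtain ⟨K2c, hK2c⟩ := ContinuousMap.exists_restrict_eq (X := ℝ × ℝ) (Y := ℝ)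
    hTriClosed ⟨_, hK.restrict⟩
  set K2 : ℝ → ℝ → ℝ := fun t s => K2c (t, s) with hK2def
  have hK2 : Continuous fun q : ℝ × ℝ => K2 q.1 q.2 := K2c.continuous
  have hK2eq : ∀ t s, t₀ ≤ s → s ≤ t → t ≤ T → K2 t s = K t s := by
    intro t s h1 h2 h3
    exact ContinuousMap.congr_fun hK2c ⟨(t, s), ⟨h1, h2, h3⟩⟩
  -- bound
  obtain ⟨B, hB0, hB⟩ : ∃ B, 0 ≤ B ∧ ∀ t s, t₀ ≤ s → s ≤ t → t ≤ T → |K2 t s| ≤ B := by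
    obtain ⟨C, hC⟩ := (isCompact_Icc.prod isCompact_Icc).exists_bound_of_continuousOn
      hK2.continuousOn
    refine ⟨max C 0, le_max_right _ _, fun t s h1 h2 h3 => le_trans ?_ (le_max_left _ _)⟩
    simpa using hC (t, s) ⟨⟨h1.trans h2, h3⟩, ⟨h1, h2.trans h3⟩⟩
  -- iterated kernels agree on the triangle
  have hKnQ : ∀ n t s, t₀ ≤ s → s ≤ t → t ≤ T → Kn (n+1) t s = iterK K2 n t s := by
    intro n
    induction n with
    | zero => intro t s h1 h2 h3; rw [hKn1]; exact (hK2eq t s h1 h2 h3).symm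
    | succ n ih =>
      intro t s h1 h2 h3
      rw [hKnrec (n+2) (by omega)]
      show (∫ z in s..t, K t z * Kn (n+2-1) z s) = ∫ z in s..t, K2 t z * iterK K2 n z s
      apply intervalIntegral.integral_congr
      intro z hz
      rw [Set.uIcc_of_le h2] at hz
      dsimp only
      rw [show n+2-1 = n+1 from rfl, ih z s h1 hz.1 (hz.2.trans h3),
        hK2eq t z (h1.trans hz.1) hz.2 h3]
  -- resolvent and its continuous extension
  have hRRcont : ContinuousOn (fun q : ℝ × ℝ => ∑' n : ℕ, lam ^ (n+1) * iterK K2 n q.1 q.2)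
      Tri := by
    apply continuousOn_tsum
      (u := fun n => |lam| ^ (n+1) * (B ^ (n+1) * (T - t₀) ^ n / n.factorial))
    · intro n; exact (continuous_const.mul (iterK_cont hK2 n)).continuousOn
    · exact summable_aux hB0 (by linarith)
    · intro n q hq; exact iterK_norm_le hK2 hB0 hB hq.1 hq.2.1 hq.2.2 n
  obtain ⟨REc, hREc⟩ := ContinuousMap.exists_restrict_eq (X := ℝ × ℝ) (Y := ℝ)
    hTriClosed ⟨_, hRRcont.restrict⟩
  set RE : ℝ × ℝ → ℝ := fun q => REc q with hREdef
  have hRE : Continuous RE := REc.continuous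
  have hREeq : ∀ t s, t₀ ≤ s → s ≤ t → t ≤ T →
      RE (t, s) = ∑' n : ℕ, lam ^ (n+1) * iterK K2 n t s := by
    intro t s h1 h2 h3
    exact ContinuousMap.congr_fun hREc ⟨(t, s), ⟨h1, h2, h3⟩⟩
  have hRmatch : ∀ t s, t₀ ≤ s → s ≤ t → t ≤ T → R t s lam = RE (t, s) := by
    intro t s h1 h2 h3
    rw [hR, hREeq t s h1 h2 h3]
    exact tsum_congr fun n => by rw [hKnQ n t s h1 h2 h3]
  -- continuous extensions of f and the a j
  set fE : ℝ → ℝ := Set.IccExtend htle (fun u : Set.Icc t₀ T => f u) with hfEdef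
  have hfEc : Continuous fE := (hf.restrict).Icc_extend'
  have hfEeq : ∀ u ∈ Set.Icc t₀ T, fE u = f u := fun u hu => Set.IccExtend_of_mem _ _ hu
  set aE : Fin (m-1) → ℝ → ℝ :=
    fun j => Set.IccExtend htle (fun u : Set.Icc t₀ T => a j u) with haEdef
  have haEc : ∀ j, Continuous (aE j) := fun j => ((ha j).restrict).Icc_extend'
  have haEeq : ∀ j, ∀ u ∈ Set.Icc t₀ T, aE j u = a j u :=
    fun j u hu => Set.IccExtend_of_mem _ _ hu
  -- the algebraic identity for the matrix-vector product
  have hAc : ∀ (c : Fin (m-1) → ℝ) i, (A *ᵥ c) i = c i + ∑ j, b j (p i) lam * c j := by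
    intro c i
    simp only [Matrix.mulVec, dotProduct, hA, add_mul, Finset.sum_add_distrib]
    congr 1
    simp [ite_mul, Finset.sum_ite_eq, one_mul, zero_mul]
  -- uniqueness of Volterra solutions (with kernel K2) for a fixed inhomogeneity
  have uniq : ∀ (G X Y : ℝ → ℝ), Continuous X → Continuous Y →
      (∀ t ∈ Set.Icc t₀ T, X t = lam * (∫ s in t₀..t, K2 t s * X s) + G t) →
      (∀ t ∈ Set.Icc t₀ T, Y t = lam * (∫ s in t₀..t, K2 t s * Y s) + G t) →
      ∀ t ∈ Set.Icc t₀ T, X t = Y t := by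
    intro G X Y hXc hYc hXs hYs
    have huniq := volterra_unique (lam := lam) (w := fun u => X u - Y u) htle hK2
      (hXc.sub hYc) ?_
    · intro t htm
      have h : X t - Y t = 0 := huniq t htm
      linarith
    · intro t htm
      have hK2t : Continuous fun s => K2 t s :=
        hK2.comp ((continuous_const (y := t)).prodMk continuous_id)
      have e : (∫ s in t₀..t, K2 t s * (X s - Y s))
          = (∫ s in t₀..t, K2 t s * X s) - ∫ s in t₀..t, K2 t s * Y s := by
        rw [← intervalIntegral.integral_sub (f := fun s => K2 t s * X s) (g := fun s => K2 t s * Y s)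
          ((hK2t.mul hXc).intervalIntegrable _ _)
          ((hK2t.mul hYc).intervalIntegrable _ _)]
        apply intervalIntegral.integral_congr
        intro s _
        dsimp only
        ring
      show X t - Y t = _
      rw [e, hXs t htm, hYs t htm]
      ring
  -- the master construction: solution with prescribed load vector data
  have master : ∀ c : Fin (m-1) → ℝ, ∃ y : ℝ → ℝ, Continuous y ∧
      (∀ t ∈ Set.Icc t₀ T,
        y t = lam * (∫ s in t₀..t, K2 t s * y s) + (fE t - ∑ j, aE j t * c j)) ∧
      (∀ i, y (p i) = d i - ∑ j, b j (p i) lam * c j) := by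
    intro c
    set G : ℝ → ℝ := fun u => fE u - ∑ j, aE j u * c j with hGdef
    have hGc : Continuous G := by
      apply hfEc.sub
      exact continuous_finset_sum _ fun j _ => (haEc j).mul continuous_const
    set y : ℝ → ℝ := fun u => G u + ∫ s in t₀..u, RE (u, s) * G s with hydef
    have hyc : Continuous y := by
      apply hGc.add
      apply intervalIntegral.continuous_parametric_intervalIntegral_of_continuous
        (f := fun u s => RE (u, s) * G s) ?_ continuous_id
      exact (hRE.comp (continuous_fst.prodMk continuous_snd)).mul (hGc.comp continuous_snd)
    have hsol := resolvent_sol hK2 hB0 hB hRE hREeq hGc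
    refine ⟨y, hyc, ?_, ?_⟩
    · intro t htm
      have h := hsol t htm
      calc y t = G t + ∫ s in t₀..t, RE (t, s) * G s := rfl
        _ = lam * (∫ s in t₀..t, K2 t s * (G s + ∫ z in t₀..s, RE (s, z) * G z)) + G t := by
            rw [← h]
        _ = lam * (∫ s in t₀..t, K2 t s * y s) + G t := rfl
    · intro i
      have hpi1 : t₀ ≤ p i := (hp i).1.le
      have hpi2 : p i ≤ T := (hp i).2.le
      have expand : (∫ s in t₀..(p i), RE (p i, s) * G s)
          = (∫ s in t₀..(p i), RE (p i, s) * fE s)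
            - ∑ j, (∫ s in t₀..(p i), RE (p i, s) * aE j s) * c j := by
        have hREpi : Continuous fun s => RE (p i, s) :=
          hRE.comp ((continuous_const (y := p i)).prodMk continuous_id)
        have e : ∀ s, RE (p i, s) * G s
            = RE (p i, s) * fE s - ∑ j, (RE (p i, s) * aE j s) * c j := by
          intro s
          rw [hGdef]
          dsimp only
          rw [mul_sub, Finset.mul_sum]
          congr 1
          exact Finset.sum_congr rfl fun j _ => by ring
        rw [intervalIntegral.integral_congr (g := fun s =>
          RE (p i, s) * fE s - ∑ j, (RE (p i, s) * aE j s) * c j) (fun s _ => e s)]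
        rw [intervalIntegral.integral_sub (f := fun s => RE (p i, s) * fE s)
          (g := fun s => ∑ j, (RE (p i, s) * aE j s) * c j) ((hREpi.mul hfEc).intervalIntegrable _ _)
          ((continuous_finset_sum _ fun j _ =>
            ((hREpi.mul (haEc j)).mul continuous_const)).intervalIntegrable _ _)]
        congr 1
        rw [intervalIntegral.integral_finset_sum (f := fun j s => (RE (p i, s) * aE j s) * c j)
          (fun j _ => ((hREpi.mul (haEc j)).mul continuous_const).intervalIntegrable _ _)]
        exact Finset.sum_congr rfl fun j _ => intervalIntegral.integral_mul_const _ _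
      have hFi : F (p i) lam = fE (p i) + ∫ s in t₀..(p i), RE (p i, s) * fE s := by
        rw [hF, hfEeq (p i) ⟨hpi1, hpi2⟩]
        congr 1
        apply intervalIntegral.integral_congr
        intro s hs
        rw [Set.uIcc_of_le hpi1] at hs
        dsimp only
        rw [hRmatch (p i) s hs.1 hs.2 hpi2, hfEeq s ⟨hs.1, hs.2.trans hpi2⟩]
      have hbi : ∀ j, b j (p i) lam
          = aE j (p i) + ∫ s in t₀..(p i), RE (p i, s) * aE j s := by
        intro j
        rw [hb, haEeq j (p i) ⟨hpi1, hpi2⟩]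
        congr 1
        apply intervalIntegral.integral_congr
        intro s hs
        rw [Set.uIcc_of_le hpi1] at hs
        dsimp only
        rw [hRmatch (p i) s hs.1 hs.2 hpi2, haEeq j s ⟨hs.1, hs.2.trans hpi2⟩]
      have hy0 : y (p i) = G (p i) + ∫ s in t₀..(p i), RE (p i, s) * G s := rfl
      have hsumb : (∑ j, b j (p i) lam * c j)
          = (∑ j, aE j (p i) * c j)
            + ∑ j, (∫ s in t₀..(p i), RE (p i, s) * aE j s) * c j := by
        rw [← Finset.sum_add_distrib]
        refine Finset.sum_congr rfl fun j _ => ?_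
        rw [hbi j]; ring
      rw [hy0, expand, hd i, hFi, hsumb]
      simp only [hGdef]
      ring
  -- translation between the LVIE and the Volterra equation with kernel K2
  have lvie_iff : ∀ (x : C(Set.Icc t₀ T, ℝ)),
      x ∈ {x : C(Set.Icc t₀ T, ℝ) |
        ∀ t ∈ Set.Icc t₀ T,
          Set.IccExtend ht.le x t + ∑ j, a j t * Set.IccExtend ht.le x (p j) =
            lam * (∫ s in t₀..t, K t s * Set.IccExtend ht.le x s) + f t} ↔
      (∀ t ∈ Set.Icc t₀ T, Set.IccExtend ht.le x t
        = lam * (∫ s in t₀..t, K2 t s * Set.IccExtend ht.le x s)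
          + (fE t - ∑ j, aE j t * (Set.IccExtend ht.le x (p j)))) := by
    intro x
    have hint : ∀ t ∈ Set.Icc t₀ T,
        (∫ s in t₀..t, K t s * Set.IccExtend ht.le x s)
          = ∫ s in t₀..t, K2 t s * Set.IccExtend ht.le x s := by
      intro t htm
      apply intervalIntegral.integral_congr
      intro s hs
      rw [Set.uIcc_of_le htm.1] at hs
      dsimp only
      rw [hK2eq t s hs.1 hs.2 htm.2]
    constructor
    · intro hx t htm
      have h := hx t htm
      rw [hint t htm] at h
      rw [hfEeq t htm]
      have hsum : (∑ j, aE j t * Set.IccExtend ht.le x (p j))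
          = ∑ j, a j t * Set.IccExtend ht.le x (p j) :=
        Finset.sum_congr rfl fun j _ => by rw [haEeq j t htm]
      rw [hsum]
      linarith
    · intro hx t htm
      have h := hx t htm
      rw [hint t htm]
      rw [← hfEeq t htm]
      have hsum : (∑ j, a j t * Set.IccExtend ht.le x (p j))
          = ∑ j, aE j t * Set.IccExtend ht.le x (p j) :=
        Finset.sum_congr rfl fun j _ => by rw [haEeq j t htm]
      rw [hsum]
      linarith
  -- IccExtend evaluation
  have hIcc : ∀ (x : C(Set.Icc t₀ T, ℝ)) (u : ℝ) (hu : u ∈ Set.Icc t₀ T),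
      Set.IccExtend ht.le x u = x ⟨u, hu⟩ := fun x u hu => Set.IccExtend_of_mem _ _ hu
  have hXcont : ∀ (x : C(Set.Icc t₀ T, ℝ)), Continuous (Set.IccExtend ht.le x) :=
    fun x => x.continuous.Icc_extend'
  constructor
  · -- MapsTo
    intro x hx
    set c : Fin (m-1) → ℝ := fun j => Set.IccExtend ht.le x (p j) with hcdef
    obtain ⟨y, hyc, hysol, hyload⟩ := master c
    have hXsol := (lvie_iff x).1 hx
    have hXY : ∀ t ∈ Set.Icc t₀ T, Set.IccExtend ht.le x t = y t :=
      uniq _ _ _ (hXcont x) hyc hXsol hysol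
    show A *ᵥ c = d
    funext i
    have hpi : p i ∈ Set.Icc t₀ T := ⟨(hp i).1.le, (hp i).2.le⟩
    have : c i = d i - ∑ j, b j (p i) lam * c j := by
      rw [hcdef]
      dsimp only
      rw [hXY (p i) hpi, hyload i]
    rw [hAc c i, this]
    ring
  constructor
  · -- InjOn
    intro x hx x' hx' heq
    set c : Fin (m-1) → ℝ := fun j => Set.IccExtend ht.le x (p j) with hcdef
    have hceq : ∀ j, Set.IccExtend ht.le x' (p j) = c j := fun j => (congrFun heq j).symm
    have hXsol := (lvie_iff x).1 hx
    have hXsol' := (lvie_iff x').1 hx'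
    have hXsol'' : ∀ t ∈ Set.Icc t₀ T, Set.IccExtend ht.le x' t
        = lam * (∫ s in t₀..t, K2 t s * Set.IccExtend ht.le x' s)
          + (fE t - ∑ j, aE j t * c j) := by
      intro t htm
      have h := hXsol' t htm
      have hs : (∑ j, aE j t * Set.IccExtend ht.le x' (p j)) = ∑ j, aE j t * c j :=
        Finset.sum_congr rfl fun j _ => by rw [hceq j]
      rw [hs] at h
      exact h
    have hXY : ∀ t ∈ Set.Icc t₀ T, Set.IccExtend ht.le x t = Set.IccExtend ht.le x' t :=
      uniq _ _ _ (hXcont x) (hXcont x') hXsol hXsol''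
    ext u
    have := hXY u u.2
    rw [hIcc x u u.2, hIcc x' u u.2] at this
    simpa using this
  · -- SurjOn
    intro c hc
    obtain ⟨y, hyc, hysol, hyload⟩ := master c
    set x : C(Set.Icc t₀ T, ℝ) := ⟨fun u => y u, hyc.comp continuous_subtype_val⟩ with hxdef
    have hXy : ∀ t ∈ Set.Icc t₀ T, Set.IccExtend ht.le x t = y t := by
      intro t htm
      rw [hIcc x t htm]
      rfl
    have hload : ∀ j, Set.IccExtend ht.le x (p j) = c j := by
      intro j
      have hpj : p j ∈ Set.Icc t₀ T := ⟨(hp j).1.le, (hp j).2.le⟩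
      rw [hXy (p j) hpj, hyload j]
      have hthis := congrFun hc j
      rw [hAc c j] at hthis
      linarith [hthis]
    refine ⟨x, ?_, funext hload⟩
    apply (lvie_iff x).2
    intro t htm
    have hsum : (∑ j, aE j t * Set.IccExtend ht.le x (p j)) = ∑ j, aE j t * c j :=
      Finset.sum_congr rfl fun j _ => by rw [hload j]
    rw [hXy t htm, hsum]
    have hint : (∫ s in t₀..t, K2 t s * Set.IccExtend ht.le x s)
        = ∫ s in t₀..t, K2 t s * y s := by
      apply intervalIntegral.integral_congr
      intro s hs
      rw [Set.uIcc_of_le htm.1] at hs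
      dsimp only
      rw [hXy s ⟨hs.1, hs.2.trans htm.2⟩]
    rw [hint]
    exact hysol t htm
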